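/- For every complex number z with |z| ≥ 1 and every real x ≥ 1, one has |z^x - 1| ≤ x·|z - 1|·|z|^x. -/

import Mathlib

open Complex

theorem cpow_sub_one_bound (z : ℂ) (hz : 1 ≤ ‖z‖) (x : ℝ) (hx : 1 ≤ x) :
    ‖z ^ (x : ℂ) - 1‖ ≤ x * ‖z - 1‖ * ‖z‖ ^ x := by
  have hx0 : (0:ℝ) ≤ x := le_trans zero_le_one hx
  have hzx1 : (1:ℝ) ≤ ‖z‖ ^ x := Real.one_le_rpow hz hx0
  by_cases hsp : z ∈ slitPlane
  · have hseg : ∀ w ∈ segment ℝ (1:ℂ) z, w ∈ slitPlane := by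
      intro w hw
      rw [segment_eq_image] at hw
      obtain ⟨t, ht, rfl⟩ := hw
      rw [Set.mem_Icc] at ht
      have hre : ((1 - t) • (1:ℂ) + t • z).re = (1 - t) + t * z.re := by
        simp [Complex.real_smul, Complex.mul_re]
      have him : ((1 - t) • (1:ℂ) + t • z).im = t * z.im := by
        simp [Complex.real_smul, Complex.mul_im]
      rw [mem_slitPlane_iff] at hsp ⊢
      rcases hsp with h | h
      · left
        simp only [hre]
        rcases eq_or_lt_of_le ht.2 with h1 | h1
        · subst h1; linarith
        · nlinarith [mul_nonneg ht.1 h.le]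
      · rcases eq_or_lt_of_le ht.1 with h0 | h0
        · left; simp only [hre, ← h0]; norm_num
        · right; simp only [him]; exact mul_ne_zero (ne_of_gt h0) h
    have hnorm : ∀ w ∈ segment ℝ (1:ℂ) z, ‖w‖ ≤ ‖z‖ := by
      intro w hw
      have h1 : (1:ℂ) ∈ Metric.closedBall (0:ℂ) (‖z‖) := by
        simp; exact hz
      have h2 : z ∈ Metric.closedBall (0:ℂ) (‖z‖) := by
        simp
      have := (convex_closedBall (0:ℂ) (‖z‖)).segment_subset h1 h2 hw
      simpa using this
    set F : ℂ → (ℂ →L[ℂ] ℂ) := fun w =>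
      ContinuousLinearMap.smulRight (1 : ℂ →L[ℂ] ℂ) ((x:ℂ) * w ^ ((x:ℂ) - 1)) with hF
    have hderiv : ∀ w ∈ segment ℝ (1:ℂ) z,
        HasFDerivWithinAt (fun w : ℂ => w ^ (x:ℂ)) (F w) (segment ℝ (1:ℂ) z) w := by
      intro w hw
      exact ((Complex.hasStrictDerivAt_cpow_const (hseg w hw)).hasDerivAt.hasDerivWithinAt).hasFDerivWithinAt
    have hbound : ∀ w ∈ segment ℝ (1:ℂ) z, ‖F w‖ ≤ x * ‖z‖ ^ x := by
      intro w hw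
      rw [hF]
      simp only [ContinuousLinearMap.norm_smulRight_apply, norm_one, one_mul]
      have hcast : ((x:ℂ) - 1) = ((x - 1 : ℝ) : ℂ) := by push_cast; ring
      rw [norm_mul, Complex.norm_real, Real.norm_eq_abs, _root_.abs_of_nonneg hx0, hcast,
        Complex.norm_cpow_real]
      have h1 : ‖w‖ ^ (x - 1) ≤ ‖z‖ ^ (x - 1) :=
        Real.rpow_le_rpow (norm_nonneg w) (hnorm w hw) (by linarith)
      have h2 : ‖z‖ ^ (x - 1) ≤ ‖z‖ ^ x :=
        Real.rpow_le_rpow_of_exponent_le hz (by linarith)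
      have hx0' : (0:ℝ) < x := lt_of_lt_of_le one_pos hx
      calc x * ‖w‖ ^ (x - 1) ≤ x * ‖z‖ ^ (x - 1) := by
            exact mul_le_mul_of_nonneg_left h1 hx0
        _ ≤ x * ‖z‖ ^ x := mul_le_mul_of_nonneg_left h2 hx0
    have key := (convex_segment (1:ℂ) z).norm_image_sub_le_of_norm_hasFDerivWithin_le
      hderiv hbound (left_mem_segment ℝ (1:ℂ) z) (right_mem_segment ℝ (1:ℂ) z)
    simp only [one_cpow] at key
    calc ‖z ^ (x:ℂ) - 1‖ ≤ x * ‖z‖ ^ x * ‖z - 1‖ := key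
      _ = x * ‖z - 1‖ * ‖z‖ ^ x := by ring
  · rw [mem_slitPlane_iff] at hsp
    push_neg at hsp
    obtain ⟨hre, him⟩ := hsp
    have hzre : ‖z‖ = -z.re := by
      have hzz : z = ((z.re : ℝ) : ℂ) := by apply Complex.ext <;> simp [him]
      nth_rewrite 1 [hzz]
      rw [Complex.norm_real, Real.norm_eq_abs, _root_.abs_of_nonpos hre]
    have hz1 : ‖z - 1‖ = 1 - z.re := by
      have : z - 1 = ((z.re - 1 : ℝ) : ℂ) := by
        apply Complex.ext <;> simp [him]
      rw [this, Complex.norm_real, Real.norm_eq_abs, abs_of_nonpos (by linarith)]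
      ring
    have hre1 : z.re ≤ -1 := by rw [hzre] at hz; linarith
    have habs : ‖z ^ (x:ℂ)‖ = ‖z‖ ^ x := Complex.norm_cpow_real z x
    have hA : (0:ℝ) ≤ ‖z‖ ^ x := by positivity
    have h2 : (2:ℝ) ≤ x * (1 - z.re) := by nlinarith
    calc ‖z ^ (x:ℂ) - 1‖ ≤ ‖z ^ (x:ℂ)‖ + ‖(1:ℂ)‖ := by
          exact norm_sub_le _ _
      _ = ‖z‖ ^ x + 1 := by rw [habs, norm_one]
      _ ≤ x * ‖z - 1‖ * ‖z‖ ^ x := by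
          rw [hz1]
          nlinarith [mul_le_mul_of_nonneg_right h2 hA]
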